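/- Let U and U' be nonprincipal ultrafilters on ℕ that are not nearly coherent, let h : ℕ → ℕ, and let ℕ be partitioned into consecutive finite intervals I_n = [a_n, a_{n+1}) such that h(x) < a_{n+1} for all x < a_n. Then there exist disjoint sets E and E', each a union of intervals of the partition, such that every infinite X ⊆ ℕ with ν_X ≤_U h has X ∩ E infinite, and every infinite X ⊆ ℕ with ν_X ≤_{U'} h has X ∩ E' infinite; in particular every such X with both ν_X ≤_U h and ν_X ≤_{U'} h is split by E. -/
import Mathlib


open Cardinal Set Filter

/-- A nonprincipal ultrafilter on ℕ: one that is not of the form `pure n`. -/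
def Nonprincipal (U : Ultrafilter ℕ) : Prop := ∀ n : ℕ, U ≠ pure n

/-- `C` is cofinal in the ultrapower `U-prod ω` with respect to `≤_U`. -/
def UCofinal (U : Ultrafilter ℕ) (C : Set (ℕ → ℕ)) : Prop :=
  ∀ f : ℕ → ℕ, ∃ g ∈ C, {n : ℕ | f n ≤ g n} ∈ U

/-- The cofinality of the ultrapower `U-prod ω`: the least cardinality of a
set of functions cofinal with respect to `≤_U`. -/
noncomputable def cfUProd (U : Ultrafilter ℕ) : Cardinal :=
  sInf {c : Cardinal | ∃ C : Set (ℕ → ℕ), UCofinal U C ∧ c = #C}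

/-- The bounding number 𝔟. -/
noncomputable def boundingNumber : Cardinal :=
  sInf {c : Cardinal | ∃ B : Set (ℕ → ℕ),
    (∀ f : ℕ → ℕ, ∃ g ∈ B, {n : ℕ | f n ≤ g n}.Infinite) ∧ c = #B}

/-- The dominating number 𝔡. -/
noncomputable def dominatingNumber : Cardinal :=
  sInf {c : Cardinal | ∃ D : Set (ℕ → ℕ),
    (∀ f : ℕ → ℕ, ∃ g ∈ D, {n : ℕ | ¬ f n ≤ g n}.Finite) ∧ c = #D}

/-- The splitting number 𝔰. -/
noncomputable def splittingNumber : Cardinal :=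
  sInf {c : Cardinal | ∃ S : Set (Set ℕ),
    (∀ X : Set ℕ, X.Infinite → ∃ Y ∈ S, (X ∩ Y).Infinite ∧ (X \ Y).Infinite) ∧ c = #S}

/-- A family of infinite subsets of ℕ is groupwise dense if it is closed under
infinite subsets and finite modifications and, for every partition of ℕ into
consecutive finite intervals (given by a strictly increasing sequence starting
at 0), the union of some infinitely many of the intervals is in the family. -/
def GroupwiseDense (G : Set (Set ℕ)) : Prop :=
  (∀ X ∈ G, X.Infinite) ∧
  (∀ X ∈ G, ∀ Y : Set ℕ, Y ⊆ X → Y.Infinite → Y ∈ G) ∧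
  (∀ X ∈ G, ∀ Y : Set ℕ, (symmDiff X Y).Finite → Y ∈ G) ∧
  (∀ a : ℕ → ℕ, a 0 = 0 → StrictMono a →
    ∃ K : Set ℕ, K.Infinite ∧ (⋃ k ∈ K, Set.Ico (a k) (a (k + 1))) ∈ G)

/-- The groupwise density number 𝔤. -/
noncomputable def groupwiseDensityNumber : Cardinal :=
  sInf {c : Cardinal | ∃ 𝒢 : Set (Set (Set ℕ)),
    (∀ G ∈ 𝒢, GroupwiseDense G) ∧ ⋂₀ 𝒢 = ∅ ∧ c = #𝒢}

/-- `U` is a pseudo-P_κ point. -/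
def PseudoPPoint (U : Ultrafilter ℕ) (κ : Cardinal) : Prop :=
  ∀ F : Set (Set ℕ), (∀ A ∈ F, A ∈ U) → #F < κ →
    ∃ A : Set ℕ, A.Infinite ∧ ∀ B ∈ F, (A \ B).Finite

/-- A finite-to-one function on ℕ. -/
def FinToOne (f : ℕ → ℕ) : Prop := ∀ n : ℕ, (f ⁻¹' {n}).Finite

/-- Two ultrafilters are nearly coherent if they have a common image under
finite-to-one maps. -/
def NearlyCoherent (U U' : Ultrafilter ℕ) : Prop :=
  ∃ f f' : ℕ → ℕ, FinToOne f ∧ FinToOne f' ∧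
    Ultrafilter.map f U = Ultrafilter.map f' U'

/-- `nuX X n` is the least element of `X` greater than `n`. -/
noncomputable def nuX (X : Set ℕ) (n : ℕ) : ℕ := sInf {m : ℕ | m ∈ X ∧ n < m}

/-- If U and U' are not nearly coherent and ℕ is partitioned into consecutive
finite intervals I_n = [a_n, a_{n+1}) with h(x) < a_{n+1} for all x < a_n, then
there are disjoint sets E, E', each a union of intervals of the partition, such
that every infinite X with ν_X ≤_U h meets E infinitely, every infinite X with
ν_X ≤_{U'} h meets E' infinitely, and every infinite X satisfying both is
split by E. -/
lemma infinite_of_unbdd {s : Set ℕ} (h : ∀ N, ∃ y ∈ s, N < y) : s.Infinite := by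
  intro hf
  obtain ⟨N, hN⟩ := hf.bddAbove
  obtain ⟨y, hy, hNy⟩ := h N
  exact absurd (hN hy) (not_le.mpr hNy)

lemma np_infinite {U : Ultrafilter ℕ} (hU : Nonprincipal U) {s : Set ℕ} (hs : s ∈ U) :
    s.Infinite := by
  intro hf
  obtain ⟨x, -, hx⟩ := Ultrafilter.eq_pure_of_finite_mem hf hs
  exact hU x hx

lemma uf_exists_mem_notMem {V W : Ultrafilter ℕ} (h : V ≠ W) :
    ∃ A : Set ℕ, A ∈ V ∧ A ∉ W := by
  by_contra hc
  push_neg at hc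
  apply h
  apply Ultrafilter.coe_injective
  apply Filter.ext
  intro A
  constructor
  · exact hc A
  · intro hAW
    by_contra hAV
    have := hc Aᶜ (Ultrafilter.compl_mem_iff_notMem.mpr hAV)
    have : A ∩ Aᶜ ∈ W := Filter.inter_mem hAW this
    simp at this

lemma meets_blocks (U : Ultrafilter ℕ) (hU : Nonprincipal U) (h : ℕ → ℕ)
    (a : ℕ → ℕ) (ha0 : a 0 = 0) (ha : StrictMono a)
    (hgrow : ∀ n : ℕ, ∀ x : ℕ, x < a n → h x < a (n + 1)) :
    ∃ ε : ℕ, ε ≤ 1 ∧ ∃ f : ℕ → ℕ, FinToOne f ∧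
      ∀ A : Set ℕ, A ∈ Ultrafilter.map f U →
      ∀ X : Set ℕ, X.Infinite → {n : ℕ | nuX X n ≤ h n} ∈ U →
      (X ∩ ⋃ m ∈ {m : ℕ | ∃ k ∈ A, m = 2*k + ε ∨ m = 2*k + 1 + ε},
          Set.Ico (a m) (a (m+1))).Infinite := by
  have hex : ∀ n : ℕ, ∃ m, n < a (m + 1) :=
    fun n => ⟨n, lt_of_lt_of_le (Nat.lt_succ_self n) ha.le_apply⟩
  set idx : ℕ → ℕ := fun n => Nat.find (hex n) with hidxdef
  have hidx1 : ∀ n, n < a (idx n + 1) := fun n => Nat.find_spec (hex n)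
  have hidx0 : ∀ n, a (idx n) ≤ n := by
    intro n
    rcases Nat.eq_zero_or_pos (idx n) with h0 | hpos
    · rw [h0, ha0]; exact Nat.zero_le n
    · have := Nat.find_min (hex n) (m := idx n - 1) (Nat.sub_lt hpos one_pos)
      have heq : idx n - 1 + 1 = idx n := by omega
      rw [heq] at this
      omega
  obtain ⟨ε, hε1, hεU⟩ : ∃ ε ≤ 1, {n | idx n % 2 = ε} ∈ U := by
    by_cases hc : {n | idx n % 2 = 0} ∈ U
    · exact ⟨0, le_refl _ |>.trans (by norm_num), hc⟩
    · refine ⟨1, le_refl 1, ?_⟩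
      have := Ultrafilter.compl_mem_iff_notMem.mpr hc
      convert this using 1
      ext n
      simp only [Set.mem_compl_iff, Set.mem_setOf_eq]
      omega
  refine ⟨ε, hε1, fun n => idx n / 2, ?_, ?_⟩
  · intro k
    apply Set.Finite.subset (Set.finite_Iio (a (2*k + 2)))
    intro n hn
    simp only [Set.mem_preimage, Set.mem_singleton_iff] at hn
    have h1 : idx n + 1 ≤ 2*k + 2 := by omega
    exact lt_of_lt_of_le (hidx1 n) (ha.monotone h1)
  · intro A hA X hX hS
    have hT : {n : ℕ | nuX X n ≤ h n} ∩ {n | idx n % 2 = ε} ∩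
        ((fun n => idx n / 2) ⁻¹' A) ∈ U :=
      Filter.inter_mem (Filter.inter_mem hS hεU) (Ultrafilter.mem_map.mp hA)
    have hTinf := np_infinite hU hT
    apply infinite_of_unbdd
    intro N
    obtain ⟨n, hn, hNn⟩ := hTinf.exists_gt N
    obtain ⟨⟨hn1, hn2⟩, hn3⟩ := hn
    simp only [Set.mem_setOf_eq] at hn1 hn2
    simp only [Set.mem_preimage] at hn3
    have hyne : {m : ℕ | m ∈ X ∧ n < m}.Nonempty := by
      obtain ⟨m, hm, hnm⟩ := hX.exists_gt n
      exact ⟨m, hm, hnm⟩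
    have hy := Nat.sInf_mem hyne
    set y := nuX X n with hydef
    obtain ⟨hyX, hny⟩ := hy
    refine ⟨y, ⟨hyX, ?_⟩, lt_trans hNn hny⟩
    have hidxn : idx n = 2 * (idx n / 2) + ε := by omega
    have hy2 : y < a (idx n + 2) := lt_of_le_of_lt hn1 (hgrow (idx n + 1) n (hidx1 n))
    have hy1 : a (idx n) ≤ y := le_trans (hidx0 n) (le_of_lt hny)
    simp only [Set.mem_iUnion, Set.mem_setOf_eq, exists_prop]
    by_cases hc : y < a (idx n + 1)
    · exact ⟨idx n, ⟨idx n / 2, hn3, Or.inl hidxn⟩, hy1, hc⟩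
    · exact ⟨idx n + 1, ⟨idx n / 2, hn3, Or.inr (by omega)⟩, not_lt.mp hc, hy2⟩

theorem stmt_13 (U U' : Ultrafilter ℕ) (hU : Nonprincipal U) (hU' : Nonprincipal U')
    (hnc : ¬ NearlyCoherent U U') (h : ℕ → ℕ)
    (a : ℕ → ℕ) (ha0 : a 0 = 0) (ha : StrictMono a)
    (hgrow : ∀ n : ℕ, ∀ x : ℕ, x < a n → h x < a (n + 1)) :
    ∃ K K' : Set ℕ,
      Disjoint (⋃ n ∈ K, Set.Ico (a n) (a (n + 1)))
        (⋃ n ∈ K', Set.Ico (a n) (a (n + 1))) ∧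
      (∀ X : Set ℕ, X.Infinite → {n : ℕ | nuX X n ≤ h n} ∈ U →
        (X ∩ ⋃ n ∈ K, Set.Ico (a n) (a (n + 1))).Infinite) ∧
      (∀ X : Set ℕ, X.Infinite → {n : ℕ | nuX X n ≤ h n} ∈ U' →
        (X ∩ ⋃ n ∈ K', Set.Ico (a n) (a (n + 1))).Infinite) ∧
      (∀ X : Set ℕ, X.Infinite → {n : ℕ | nuX X n ≤ h n} ∈ U →
        {n : ℕ | nuX X n ≤ h n} ∈ U' →
        (X ∩ ⋃ n ∈ K, Set.Ico (a n) (a (n + 1))).Infinite ∧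
        (X \ ⋃ n ∈ K, Set.Ico (a n) (a (n + 1))).Infinite) := by
  have hnc' : ∀ g g' : ℕ → ℕ, FinToOne g → FinToOne g' →
      Ultrafilter.map g U ≠ Ultrafilter.map g' U' :=
    fun g g' h1 h2 he => hnc ⟨g, g', h1, h2, he⟩
  obtain ⟨ε, hε, f, hf, hmain⟩ := meets_blocks U hU h a ha0 ha hgrow
  obtain ⟨ε', hε', f', hf', hmain'⟩ := meets_blocks U' hU' h a ha0 ha hgrow
  -- shifted versions of f' are finite-to-one
  have hft : FinToOne (fun n => f' n + 1) := by
    intro k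
    apply Set.Finite.subset (hf' (k - 1))
    intro n hn
    simp only [Set.mem_preimage, Set.mem_singleton_iff] at hn ⊢
    omega
  have hfp : FinToOne (fun n => f' n - 1) := by
    intro k
    apply Set.Finite.subset ((hf' k).union (hf' (k + 1)))
    intro n hn
    simp only [Set.mem_preimage, Set.mem_singleton_iff, Set.mem_union] at hn ⊢
    omega
  set V := Ultrafilter.map f U with hV
  set W := Ultrafilter.map f' U' with hW
  obtain ⟨A₁, hA₁V, hA₁⟩ := uf_exists_mem_notMem (hnc' f f' hf hf')
  obtain ⟨A₂, hA₂V, hA₂⟩ := uf_exists_mem_notMem (hnc' f (fun n => f' n + 1) hf hft)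
  obtain ⟨A₃, hA₃V, hA₃⟩ := uf_exists_mem_notMem (hnc' f (fun n => f' n - 1) hf hfp)
  set A : Set ℕ := A₁ ∩ A₂ ∩ A₃ with hAdef
  have hAV : A ∈ V := Filter.inter_mem (Filter.inter_mem hA₁V hA₂V) hA₃V
  have hA1 : A ∉ W := fun hc => hA₁ (Filter.mem_of_superset hc (by intro x hx; exact hx.1.1))
  have hA2 : A ∉ Ultrafilter.map (fun n => f' n + 1) U' :=
    fun hc => hA₂ (Filter.mem_of_superset hc (by intro x hx; exact hx.1.2))
  have hA3 : A ∉ Ultrafilter.map (fun n => f' n - 1) U' :=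
    fun hc => hA₃ (Filter.mem_of_superset hc (by intro x hx; exact hx.2))
  set A' : Set ℕ := {k | k ∉ A ∧ k + 1 ∉ A ∧ k - 1 ∉ A} with hA'def
  have hA'W : A' ∈ W := by
    have h1 : Aᶜ ∈ W := Ultrafilter.compl_mem_iff_notMem.mpr hA1
    have h2 : {k | k + 1 ∉ A} ∈ W := by
      have : Aᶜ ∈ Ultrafilter.map (fun n => f' n + 1) U' :=
        Ultrafilter.compl_mem_iff_notMem.mpr hA2
      rw [Ultrafilter.mem_map] at this ⊢
      exact this
    have h3 : {k | k - 1 ∉ A} ∈ W := by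
      have : Aᶜ ∈ Ultrafilter.map (fun n => f' n - 1) U' :=
        Ultrafilter.compl_mem_iff_notMem.mpr hA3
      rw [Ultrafilter.mem_map] at this ⊢
      exact this
    have : Aᶜ ∩ ({k | k + 1 ∉ A} ∩ {k | k - 1 ∉ A}) ∈ W :=
      Filter.inter_mem h1 (Filter.inter_mem h2 h3)
    exact Filter.mem_of_superset this (fun k hk => ⟨hk.1, hk.2.1, hk.2.2⟩)
  have hdisj : Disjoint
      (⋃ m ∈ {m : ℕ | ∃ k ∈ A, m = 2*k + ε ∨ m = 2*k + 1 + ε}, Set.Ico (a m) (a (m+1)))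
      (⋃ m ∈ {m : ℕ | ∃ k ∈ A', m = 2*k + ε' ∨ m = 2*k + 1 + ε'}, Set.Ico (a m) (a (m+1))) := by
    rw [Set.disjoint_left]
    intro y hy hy'
    simp only [Set.mem_iUnion, Set.mem_setOf_eq, exists_prop] at hy hy'
    obtain ⟨m, ⟨k, hkA, hmk⟩, hym⟩ := hy
    obtain ⟨m', ⟨j, hjA', hmj⟩, hym'⟩ := hy'
    have hmm : m = m' := by
      rcases lt_trichotomy m m' with hlt | heq | hgt
      · have : a (m + 1) ≤ a m' := ha.monotone hlt
        rw [Set.mem_Ico] at hym hym'; omega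
      · exact heq
      · have : a (m' + 1) ≤ a m := ha.monotone hgt
        rw [Set.mem_Ico] at hym hym'; omega
    obtain ⟨hj1, hj2, hj3⟩ := hjA'
    have hcase : k = j ∨ k = j + 1 ∨ j = k + 1 := by omega
    rcases hcase with hc | hc | hc
    · exact hj1 (hc ▸ hkA)
    · exact hj2 (hc ▸ hkA)
    · apply hj3; have : j - 1 = k := by omega
      exact this ▸ hkA
  refine ⟨{m : ℕ | ∃ k ∈ A, m = 2*k + ε ∨ m = 2*k + 1 + ε},
          {m : ℕ | ∃ k ∈ A', m = 2*k + ε' ∨ m = 2*k + 1 + ε'}, hdisj, ?_, ?_, ?_⟩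
  · exact fun X hX hS => hmain A hAV X hX hS
  · exact fun X hX hS => hmain' A' hA'W X hX hS
  · intro X hX h1 h2
    refine ⟨hmain A hAV X hX h1, ?_⟩
    apply Set.Infinite.mono ?_ (hmain' A' hA'W X hX h2)
    intro y hy
    exact ⟨hy.1, fun hyE => Set.disjoint_left.mp hdisj hyE hy.2⟩
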